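/- Let P ⊆ 2^[n] be a family of subsets partitioned into pairwise disjoint intervals [F_i, G_i], i = 1,…,r, where [F,G] = {H : F ⊆ H ⊆ G}, and suppose |G_i| ≥ d for all i. Define α_k = |{A ∈ P : |A| = k}|, β_0 = α_0, and β_k = α_k - Σ_{j=0}^{k-1} β_j · C(d-j, k-j) for 1 ≤ k ≤ d. Then β_k ≥ 0 for all 0 ≤ k ≤ d. -/

import Mathlib

open Finset

/-- Double hockey stick: `∑_{u=0}^{N} C(u,a) C(N-u,b) = C(N+1, a+b+1)`. -/
private lemma dhs (a : ℕ) : ∀ N : ℕ, ∀ b : ℕ,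
    ∑ u ∈ range (N + 1), u.choose a * (N - u).choose b = (N + 1).choose (a + b + 1) := by
  intro N
  induction N with
  | zero =>
    intro b
    cases a <;> cases b <;> simp [Nat.choose]
  | succ N ih =>
    intro b
    rw [Finset.sum_range_succ]
    cases b with
    | zero =>
      have h1 : ∑ u ∈ range (N + 1), u.choose a * (N + 1 - u).choose 0
          = ∑ u ∈ range (N + 1), u.choose a * (N - u).choose 0 := by
        apply Finset.sum_congr rfl
        intro u _
        simp
      rw [h1, ih 0]
      simp only [Nat.sub_self, Nat.choose_zero_right, mul_one, Nat.add_zero,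
        Nat.choose_succ_succ, Nat.succ_eq_add_one]
      omega
    | succ b' =>
      have h1 : ∑ u ∈ range (N + 1), u.choose a * (N + 1 - u).choose (b' + 1)
          = ∑ u ∈ range (N + 1),
              (u.choose a * (N - u).choose b' + u.choose a * (N - u).choose (b' + 1)) := by
        apply Finset.sum_congr rfl
        intro u hu
        have hu' : u ≤ N := Nat.lt_succ_iff.mp (Finset.mem_range.mp hu)
        have : N + 1 - u = (N - u) + 1 := by omega
        rw [this, Nat.choose_succ_succ, Nat.mul_add]
      rw [h1, Finset.sum_add_distrib, ih b', ih (b' + 1)]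
      have h2 : (N + 1 - (N + 1)).choose (b' + 1) = 0 := by
        simp
      rw [h2, Nat.mul_zero, Nat.add_zero,
        show a + (b' + 1) + 1 = a + b' + 1 + 1 by omega]
      have h3 : (N + 1 + 1).choose (a + b' + 1 + 1)
          = (N + 1).choose (a + b' + 1) + (N + 1).choose (a + b' + 1 + 1) :=
        Nat.choose_succ_succ (N + 1) (a + b' + 1)
      omega

/-- Key identity: for `t ≤ D`,
`∑_{s=0}^{t} C(m+s-1, s) C(D-s, t-s) = C(m+D, t)`. -/
private lemma keyid (m D t : ℕ) (h : t ≤ D) :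
    ∑ s ∈ range (t + 1), (m + s - 1).choose s * (D - s).choose (t - s)
      = (m + D).choose t := by
  cases m with
  | zero =>
    rw [Finset.sum_eq_single 0]
    · simp
    · intro s hs hs0
      rw [Nat.choose_eq_zero_of_lt (by omega), Nat.zero_mul]
    · intro h0
      simp at h0
  | succ m' =>
    -- rewrite each term
    have h1 : ∑ s ∈ range (t + 1), (m' + 1 + s - 1).choose s * (D - s).choose (t - s)
        = ∑ s ∈ range (t + 1), (m' + s).choose m' * (D - s).choose (D - t) := by
      apply Finset.sum_congr rfl
      intro s hs
      have hst : s ≤ t := Nat.lt_succ_iff.mp (Finset.mem_range.mp hs)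
      have e1 : m' + 1 + s - 1 = m' + s := by omega
      rw [e1, Nat.choose_symm_add]
      congr 1
      have e2 : (D - s) - (t - s) = D - t := by omega
      rw [← e2, Nat.choose_symm (by omega)]
    rw [h1]
    -- extend the sum to range (D+1)
    have h2 : ∑ s ∈ range (D + 1), (m' + s).choose m' * (D - s).choose (D - t)
        = ∑ s ∈ range (t + 1), (m' + s).choose m' * (D - s).choose (D - t) := by
      rw [show D + 1 = (t + 1) + (D - t) by omega, Finset.sum_range_add]
      have : ∑ x ∈ range (D - t), (m' + (t + 1 + x)).choose m'
          * (D - (t + 1 + x)).choose (D - t) = 0 := by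
        apply Finset.sum_eq_zero
        intro x hx
        have hx' : x < D - t := Finset.mem_range.mp hx
        rw [Nat.choose_eq_zero_of_lt (show D - (t + 1 + x) < D - t by omega), Nat.mul_zero]
      rw [this, Nat.add_zero]
    rw [← h2]
    -- use dhs
    have key := dhs m' (m' + D) (D - t)
    rw [show m' + D + 1 = m' + (D + 1) by ring, Finset.sum_range_add] at key
    have h3 : ∑ u ∈ range m', u.choose m' * (m' + D - u).choose (D - t) = 0 := by
      apply Finset.sum_eq_zero
      intro u hu
      rw [Nat.choose_eq_zero_of_lt (Finset.mem_range.mp hu), Nat.zero_mul]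
    rw [h3, Nat.zero_add] at key
    have h4 : ∑ x ∈ range (D + 1), (m' + x).choose m' * (m' + D - (m' + x)).choose (D - t)
        = ∑ x ∈ range (D + 1), (m' + x).choose m' * (D - x).choose (D - t) := by
      apply Finset.sum_congr rfl
      intro x _
      congr 2
      omega
    rw [h4] at key
    rw [key]
    have e4 : m' + (D + 1) = m' + D + 1 := by omega
    have e3 : m' + D + 1 - t = m' + (D - t) + 1 := by omega
    rw [e4, ← e3, Nat.choose_symm (show t ≤ m' + D + 1 by omega)]
    congr 1
    omega

/-- Counting sets of size `k` in the interval `[F, G]`. -/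
private lemma count {n : ℕ} (F G : Finset (Fin n)) (h : F ⊆ G) (k : ℕ) :
    ((Finset.Icc F G).filter (fun A => A.card = k)).card
      = if F.card ≤ k then (G.card - F.card).choose (k - F.card) else 0 := by
  split_ifs with hfk
  · rw [← Finset.card_sdiff_of_subset h, ← Finset.card_powersetCard]
    apply Finset.card_nbij' (i := fun A => A \ F) (j := fun S => S ∪ F)
    · intro A hA
      simp only [Finset.mem_coe, Finset.mem_filter, Finset.mem_Icc] at hA
      obtain ⟨⟨hFA, hAG⟩, hAk⟩ := hA
      simp only [Finset.mem_coe, Finset.mem_powersetCard]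
      constructor
      · exact Finset.sdiff_subset_sdiff hAG (Finset.Subset.refl F)
      · rw [Finset.card_sdiff_of_subset hFA, hAk]
    · intro S hS
      rw [Finset.mem_coe, Finset.mem_powersetCard] at hS
      obtain ⟨hSG, hSk⟩ := hS
      have hdisj : Disjoint S F := Finset.disjoint_of_subset_left hSG Finset.sdiff_disjoint
      have hFle : F.card ≤ k := hfk
      simp only [Finset.mem_coe, Finset.mem_filter, Finset.mem_Icc]
      refine ⟨⟨Finset.subset_union_right, ?_⟩, ?_⟩
      · exact Finset.union_subset (hSG.trans Finset.sdiff_subset) h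
      · rw [Finset.card_union_of_disjoint hdisj, hSk]
        omega
    · intro A hA
      simp only [Finset.mem_coe, Finset.mem_filter, Finset.mem_Icc] at hA
      exact Finset.sdiff_union_of_subset hA.1.1
    · intro S hS
      rw [Finset.mem_coe, Finset.mem_powersetCard] at hS
      exact Finset.union_sdiff_cancel_right
        (Finset.disjoint_of_subset_left hS.1 Finset.sdiff_disjoint)
  · rw [Finset.card_eq_zero, Finset.eq_empty_iff_forall_notMem]
    intro A hA
    simp only [Finset.mem_filter, Finset.mem_Icc] at hA
    exact hfk (hA.2 ▸ Finset.card_le_card hA.1.1)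

/-- Per-interval expansion of the count into the β-recursion kernel. -/
private lemma per (f g d k : ℕ) (hfg : f ≤ g) (hdg : d ≤ g) (hk : k ≤ d) :
    (if f ≤ k then (g - f).choose (k - f) else 0)
      = ∑ j ∈ range (k + 1),
          (if f ≤ j then (g - d + (j - f) - 1).choose (j - f) else 0)
            * (d - j).choose (k - j) := by
  by_cases hfk : f ≤ k
  · rw [if_pos hfk]
    rw [show k + 1 = f + (k - f + 1) by omega, Finset.sum_range_add]
    have h1 : ∑ j ∈ range f,
        (if f ≤ j then (g - d + (j - f) - 1).choose (j - f) else 0)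
          * (d - j).choose (k - j) = 0 := by
      apply Finset.sum_eq_zero
      intro j hj
      rw [if_neg (by have := Finset.mem_range.mp hj; omega), Nat.zero_mul]
    rw [h1, Nat.zero_add]
    have h2 : ∀ s ∈ range (k - f + 1),
        (if f ≤ f + s then (g - d + (f + s - f) - 1).choose (f + s - f) else 0)
          * (d - (f + s)).choose (k - (f + s))
        = (g - d + s - 1).choose s * ((d - f) - s).choose ((k - f) - s) := by
      intro s _
      rw [if_pos (Nat.le_add_right f s)]
      have e1 : f + s - f = s := by omega
      have e2 : d - (f + s) = (d - f) - s := by omega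
      have e3 : k - (f + s) = (k - f) - s := by omega
      rw [e1, e2, e3]
    rw [Finset.sum_congr rfl h2, keyid (g - d) (d - f) (k - f) (by omega)]
    congr 1
    omega
  · rw [if_neg hfk]
    symm
    apply Finset.sum_eq_zero
    intro j hj
    rw [if_neg (by have := Finset.mem_range.mp hj; omega), Nat.zero_mul]

theorem stmt2 (n d r : ℕ) (P : Finset (Finset (Fin n)))
    (F G : Fin r → Finset (Fin n))
    (hFG : ∀ i, F i ⊆ G i)
    (hdisj : ∀ i j, i ≠ j → Disjoint (Finset.Icc (F i) (G i)) (Finset.Icc (F j) (G j)))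
    (hcover : ∀ A, A ∈ P ↔ ∃ i, A ∈ Finset.Icc (F i) (G i))
    (hGd : ∀ i, d ≤ (G i).card)
    (α : ℕ → ℤ) (hα : ∀ k, α k = ((P.filter (fun A => A.card = k)).card : ℤ))
    (β : ℕ → ℤ) (hβ0 : β 0 = α 0)
    (hβ : ∀ k, 1 ≤ k → k ≤ d →
      β k = α k - ∑ j ∈ Finset.range k, β j * ((d - j).choose (k - j) : ℤ)) :
    ∀ k ≤ d, 0 ≤ β k := by
  classical
  set c : Fin r → ℕ → ℕ := fun i k =>
    if (F i).card ≤ k then ((G i).card - d + (k - (F i).card) - 1).choose (k - (F i).card)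
    else 0 with hc
  have hP : P = Finset.univ.biUnion (fun i => Finset.Icc (F i) (G i)) := by
    ext A
    simp only [Finset.mem_biUnion, Finset.mem_univ, true_and]
    exact hcover A
  have hαsum : ∀ k, α k
      = ∑ i : Fin r, (((Finset.Icc (F i) (G i)).filter (fun A => A.card = k)).card : ℤ) := by
    intro k
    rw [hα, hP, Finset.filter_biUnion, Finset.card_biUnion]
    · push_cast
      rfl
    · intro i _ j _ hij
      exact Finset.disjoint_filter_filter (hdisj i j hij)
  have hper : ∀ k, k ≤ d → ∀ i : Fin r,
      (((Finset.Icc (F i) (G i)).filter (fun A => A.card = k)).card : ℤ)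
        = ∑ j ∈ Finset.range (k + 1), (c i j : ℤ) * ((d - j).choose (k - j) : ℤ) := by
    intro k hk i
    rw [count (F i) (G i) (hFG i) k,
      per (F i).card (G i).card d k (Finset.card_le_card (hFG i)) (hGd i) hk]
    push_cast [hc]
    rfl
  have claim : ∀ k, k ≤ d → β k = ∑ i : Fin r, (c i k : ℤ) := by
    intro k
    induction k using Nat.strong_induction_on with
    | _ k ih =>
      intro hk
      have e1 : α k = ∑ j ∈ Finset.range (k + 1),
          (∑ i : Fin r, (c i j : ℤ)) * ((d - j).choose (k - j) : ℤ) := by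
        rw [hαsum k, Finset.sum_congr rfl (fun i _ => hper k hk i), Finset.sum_comm]
        exact Finset.sum_congr rfl (fun j _ => (Finset.sum_mul _ _ _).symm)
      rcases Nat.eq_zero_or_pos k with h0 | h1
      · subst h0
        rw [hβ0, e1]
        simp
      · rw [hβ k h1 hk, e1, Finset.sum_range_succ]
        have e2 : ∑ j ∈ Finset.range k,
            (∑ i : Fin r, (c i j : ℤ)) * ((d - j).choose (k - j) : ℤ)
            = ∑ j ∈ Finset.range k, β j * ((d - j).choose (k - j) : ℤ) := by
          apply Finset.sum_congr rfl
          intro j hj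
          have hjk := Finset.mem_range.mp hj
          rw [ih j hjk (by omega)]
        rw [e2, Nat.sub_self, Nat.choose_zero_right]
        push_cast
        ring
  intro k hk
  rw [claim k hk]
  exact Finset.sum_nonneg fun i _ => Int.natCast_nonneg _
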